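/- Let R ⊆ {1,…,m} be nonempty. For realized test statistics x ∈ ℝ^m, the one-sided step-down procedure selects Ŝ ⊇ R if and only if there exists a bijection σ of {1,…,m} onto itself such that, for every h ∈ {1,…,m} with σ(h) ≤ max_{r∈R} σ(r), one has x_h ≥ x̄( σ^{-1}({σ(h),…,m}) ). -/

import Mathlib

open MeasureTheory ProbabilityTheory Filter

variable {m : ℕ}

/-- `l` enumerates all indices of `Fin m`, sorted in descending order of `key`. -/
def SortedEnum (key : Fin m → ℝ) (l : List (Fin m)) : Prop :=
  l.Nodup ∧ (∀ i : Fin m, i ∈ l) ∧ l.Pairwise fun i j => key j ≤ key i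

/-- One pass of a step-down testing algorithm along a (sorted) list. -/
noncomputable def stepDownRun (xbar : Finset (Fin m) → ℝ) (key : Fin m → ℝ) :
    List (Fin m) → Finset (Fin m)
  | [] => ∅
  | h :: t =>
      if key h < xbar (insert h t.toFinset) then ∅
      else insert h (stepDownRun xbar key t)

/-- The one-sided step-down procedure run on `x` returns exactly `S`. -/
def SelectsOneSided (xbar : Finset (Fin m) → ℝ) (x : Fin m → ℝ) (S : Finset (Fin m)) : Prop :=
  ∃ l : List (Fin m), SortedEnum x l ∧ stepDownRun xbar x l = S

/-- The one-sided step-down procedure run on `x` selects a set containing `R`. -/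
def SelectsOneSidedSuperset (xbar : Finset (Fin m) → ℝ) (x : Fin m → ℝ)
    (R : Finset (Fin m)) : Prop :=
  ∃ l : List (Fin m), SortedEnum x l ∧ R ⊆ stepDownRun xbar x l

/-- If `r` is selected by the run, then every element up to `r` passes its test. -/
lemma pass_of_mem_run (xbar : Finset (Fin m) → ℝ) (key : Fin m → ℝ) :
    ∀ l : List (Fin m), l.Nodup → ∀ r ∈ stepDownRun xbar key l,
      ∀ l₁ h l₂, l = l₁ ++ h :: l₂ → r ∈ h :: l₂ →
        xbar (insert h l₂.toFinset) ≤ key h := by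
  intro l
  induction l with
  | nil => intro _ r hr; simp [stepDownRun] at hr
  | cons a t ih =>
    intro nd r hr l₁ h l₂ hdec hmem
    simp only [stepDownRun] at hr
    by_cases c : key a < xbar (insert a t.toFinset)
    · rw [if_pos c] at hr; simp at hr
    · rw [if_neg c] at hr
      cases l₁ with
      | nil =>
        simp only [List.nil_append, List.cons.injEq] at hdec
        rw [← hdec.1, ← hdec.2]
        exact le_of_not_gt c
      | cons b l₁' =>
        simp only [List.cons_append, List.cons.injEq] at hdec
        have ht : t = l₁' ++ h :: l₂ := hdec.2
        have hrt : r ∈ t := by rw [ht]; exact List.mem_append_right _ hmem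
        have hra : r ≠ a := by
          intro e; exact (List.nodup_cons.mp nd).1 (e ▸ hrt)
        have hr' : r ∈ stepDownRun xbar key t := by
          rcases Finset.mem_insert.mp hr with h' | h'
          · exact absurd h' hra
          · exact h'
        exact ih (List.nodup_cons.mp nd).2 r hr' l₁' h l₂ ht hmem

/-- If every element up to `r` passes its test, then `r` is selected by the run. -/
lemma mem_run_of_pass (xbar : Finset (Fin m) → ℝ) (key : Fin m → ℝ) :
    ∀ l : List (Fin m), ∀ r ∈ l,
      (∀ l₁ h l₂, l = l₁ ++ h :: l₂ → r ∈ h :: l₂ →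
        xbar (insert h l₂.toFinset) ≤ key h) →
      r ∈ stepDownRun xbar key l := by
  intro l
  induction l with
  | nil => intro r hr; simp at hr
  | cons a t ih =>
    intro r hr hpass
    simp only [stepDownRun]
    have c : ¬ key a < xbar (insert a t.toFinset) :=
      not_lt.mpr (hpass [] a t rfl hr)
    rw [if_neg c]
    rcases List.mem_cons.mp hr with h' | h'
    · exact Finset.mem_insert.mpr (Or.inl h')
    · refine Finset.mem_insert.mpr (Or.inr (ih r h' ?_))
      intro l₁ h l₂ hdec hmem
      exact hpass (a :: l₁) h l₂ (by rw [hdec]; rfl) hmem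

/-- **Geometry of the event `Ŝ ⊇ R` for one-sided step-down rules.** The
one-sided step-down procedure selects `Ŝ ⊇ R` if and only if there is a
bijection `σ` of `{1,…,m}` (here a permutation of `Fin m`) such that every `h`
with rank `σ(h) ≤ max_{r ∈ R} σ(r)` satisfies `x_h ≥ x̄(σ⁻¹({σ(h),…,m}))`. -/
theorem stepdown_superset_geometry
    (hm : 0 < m)
    (xbar : Finset (Fin m) → ℝ) (hxpos : ∀ B, 0 < xbar B)
    (hxmono : ∀ B C : Finset (Fin m), B ⊆ C → xbar B ≤ xbar C)
    (x : Fin m → ℝ) (R : Finset (Fin m)) (hR : R.Nonempty) :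
    SelectsOneSidedSuperset xbar x R ↔
      ∃ σ : Equiv.Perm (Fin m),
        ∀ h : Fin m, σ h ≤ R.sup' hR (fun r => σ r) →
          xbar (Finset.univ.filter fun k => σ h ≤ σ k) ≤ x h := by
  constructor
  · rintro ⟨l, ⟨nd, hmem, hsort⟩, hsub⟩
    have hlen : l.length = m := by
      have h1 : l.toFinset = Finset.univ := by
        ext k; simp [hmem k]
      have h2 := List.toFinset_card_of_nodup nd
      rw [h1] at h2
      simpa using h2.symm
    let e : Fin l.length ≃ Fin m := List.Nodup.getEquivOfForallMemList l nd hmem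
    refine ⟨(e.symm.trans (finCongr hlen)), ?_⟩
    have hget : ∀ k : Fin m, ∀ hlt : ((e.symm.trans (finCongr hlen)) k : ℕ) < l.length,
        l[((e.symm.trans (finCongr hlen)) k : ℕ)] = k := by
      intro k hlt
      have : e (e.symm k) = k := e.apply_symm_apply k
      exact this
    set σ : Equiv.Perm (Fin m) := e.symm.trans (finCongr hlen) with hσ
    have hσlt : ∀ k : Fin m, (σ k : ℕ) < l.length := fun k => by
      rw [hlen]; exact (σ k).isLt
    have hdrop : ∀ (n : ℕ) (k : Fin m), k ∈ l.drop n ↔ n ≤ (σ k : ℕ) := by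
      intro n k
      constructor
      · intro hk
        obtain ⟨j, hj, hjk⟩ := List.mem_iff_getElem.mp hk
        rw [List.getElem_drop] at hjk
        have hlt : n + j < l.length := by
          have := List.length_drop (i := n) (l := l) ▸ hj; omega
        have := (List.Nodup.getElem_inj_iff nd (hi := hlt) (hj := hσlt k)).mp
          (by rw [hjk, hget k (hσlt k)])
        omega
      · intro hle
        rw [List.mem_iff_getElem]
        refine ⟨(σ k : ℕ) - n, ?_, ?_⟩
        · rw [List.length_drop]; have := hσlt k; omega
        · rw [List.getElem_drop]
          have : n + ((σ k : ℕ) - n) = (σ k : ℕ) := by omega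
          simp_rw [this]
          exact hget k (hσlt k)
    intro h hle
    obtain ⟨r, hrR, hrsup⟩ := Finset.exists_mem_eq_sup' hR (fun r => σ r)
    have hgoal : h :: l.drop ((σ h : ℕ) + 1) = l.drop (σ h : ℕ) := by
      rw [List.drop_eq_getElem_cons (hσlt h), hget h (hσlt h)]
    have hfilter : (Finset.univ.filter fun k => σ h ≤ σ k) = (l.drop (σ h : ℕ)).toFinset := by
      ext k
      simp only [Finset.mem_filter, Finset.mem_univ, true_and, List.mem_toFinset, hdrop,
        Fin.le_def]
    have hdec : l = l.take (σ h : ℕ) ++ (h :: l.drop ((σ h : ℕ) + 1)) := by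
      conv_lhs => rw [← List.take_append_drop (σ h : ℕ) l]
      rw [← hgoal]
    have hrmem : r ∈ h :: l.drop ((σ h : ℕ) + 1) := by
      rw [hgoal, hdrop]
      rw [hrsup] at hle
      exact Fin.le_def.mp hle
    have hpass := pass_of_mem_run xbar x l nd r (hsub hrR)
      (l.take (σ h : ℕ)) h (l.drop ((σ h : ℕ) + 1)) hdec hrmem
    rw [hfilter, ← hgoal, List.toFinset_cons]
    exact hpass
  · rintro ⟨σ, hσ⟩
    haveI : Std.Total (α := Fin m) (fun i j => x j ≤ x i) := ⟨fun a b => le_total (x b) (x a)⟩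
    haveI : IsTrans (Fin m) (fun i j => x j ≤ x i) := ⟨fun _ _ _ h1 h2 => le_trans h2 h1⟩
    set l := List.insertionSort (fun i j => x j ≤ x i) (List.finRange m) with hl
    have hperm := List.perm_insertionSort (fun i j => x j ≤ x i) (List.finRange m)
    have nd : l.Nodup := hperm.nodup_iff.mpr (List.nodup_finRange m)
    have hmem : ∀ i : Fin m, i ∈ l := fun i => hperm.mem_iff.mpr (List.mem_finRange i)
    have hsort : l.Pairwise fun i j => x j ≤ x i := List.pairwise_insertionSort _ _
    refine ⟨l, ⟨nd, hmem, hsort⟩, ?_⟩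
    intro r hrR
    apply mem_run_of_pass xbar x l r (hmem r)
    intro l₁ h l₂ hdec hmemr
    set T : Finset (Fin m) := (h :: l₂).toFinset with hT
    have hrT : r ∈ T := List.mem_toFinset.mpr hmemr
    obtain ⟨g, hgT, hmin⟩ := Finset.exists_min_image T (fun k => σ k) ⟨r, hrT⟩
    have h1 : σ g ≤ R.sup' hR fun r => σ r :=
      le_trans (hmin r hrT) (Finset.le_sup' (fun r => σ r) hrR)
    have h2 : xbar (Finset.univ.filter fun k => σ g ≤ σ k) ≤ x g := hσ g h1
    have h3 : T ⊆ Finset.univ.filter fun k => σ g ≤ σ k := by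
      intro k hk
      exact Finset.mem_filter.mpr ⟨Finset.mem_univ k, hmin k hk⟩
    have h4 : x g ≤ x h := by
      have hsubl : (h :: l₂).Sublist l := hdec ▸ List.sublist_append_right l₁ (h :: l₂)
      have hs2 : (h :: l₂).Pairwise fun i j => x j ≤ x i := hsort.sublist hsubl
      rcases List.mem_cons.mp (List.mem_toFinset.mp hgT) with hg | hg
      · rw [hg]
      · exact List.rel_of_pairwise_cons hs2 hg
    have : xbar (insert h l₂.toFinset) = xbar T := by rw [hT, List.toFinset_cons]
    rw [this]
    calc xbar T ≤ xbar (Finset.univ.filter fun k => σ g ≤ σ k) := hxmono _ _ h3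
      _ ≤ x g := h2
      _ ≤ x h := h4
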